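/- Let P be a finite poset, p ∈ (0,1], and J' an order ideal of P. Let T_{J(P)}(J') denote the number of steps for the Ungarian Markov chain with parameter p on J(P) started at J' to reach the empty ideal ∅, and let T(J(P)) denote the same quantity for the chain started at the maximum element P. Then for every t ≥ 0, P(T_{J(P)}(J') ≥ t) ≤ P(T(J(P)) ≥ t). -/

import Mathlib

open scoped Classical ENNReal

noncomputable section

namespace Ungarian

variable {L : Type*} [Fintype L]

/-- `y` is covered by `x` with respect to the order relation `le`. -/
def CovRel (le : L → L → Prop) (x y : L) : Prop :=
  le y x ∧ y ≠ x ∧ ∀ z, le y z → le z x → z = y ∨ z = x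

/-- The finset of elements covered by `x`. -/
def covFinset (le : L → L → Prop) (x : L) : Finset L :=
  Finset.univ.filter fun y => CovRel le x y

/-- `m` is a greatest lower bound of `S` with respect to `le`. -/
def IsMeetOf (le : L → L → Prop) (S : Set L) (m : L) : Prop :=
  (∀ s ∈ S, le m s) ∧ ∀ z, (∀ s ∈ S, le z s) → le z m

/-- The meet of `{x} ∪ T`. -/
def meetOf (le : L → L → Prop) (x : L) (T : Finset L) : L :=
  if h : ∃ m, IsMeetOf le (insert x (T : Set L)) m then h.choose else x

/-- One-step transition probabilities of the Ungarian Markov chain with parameter `p`: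
from `x`, a random subset `T` of the set of elements covered by `x` is chosen, each element
independently with probability `p`, and the chain moves to the meet of `{x} ∪ T`. -/
def stepProb (p : ℝ) (le : L → L → Prop) (x y : L) : ℝ≥0∞ :=
  ∑ T ∈ (covFinset le x).powerset,
    if meetOf le x T = y then
      ENNReal.ofReal (p ^ T.card * (1 - p) ^ ((covFinset le x).card - T.card))
    else 0

/-- Distribution after `t` steps started from `x`. -/
def walk (p : ℝ) (le : L → L → Prop) (x : L) : ℕ → L → ℝ≥0∞
  | 0 => fun y => if y = x then 1 else 0
  | t + 1 => fun y => ∑ z : L, walk p le x t z * stepProb p le z y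

/-- Probability that the chain started at `x` lies in `S` after `t` steps. -/
def probIn (p : ℝ) (le : L → L → Prop) (x : L) (t : ℕ) (S : Set L) : ℝ≥0∞ :=
  ∑ y ∈ Finset.univ.filter (· ∈ S), walk p le x t y

/-- Expected number of steps until absorption at `bot`, computed as `∑_t P(X_t ≠ bot)`. -/
def expAbsorb (p : ℝ) (le : L → L → Prop) (x bot : L) : ℝ≥0∞ :=
  ∑' t : ℕ, probIn p le x t {y | y ≠ bot}

end Ungarian

/-- The order ideals (downward closed subsets) of a finite poset `P`. -/
def OrderIdeals (P : Type*) [Fintype P] [PartialOrder P] : Type _ :=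
  {S : Finset P // ∀ x ∈ S, ∀ y, y ≤ x → y ∈ S}

noncomputable instance (P : Type*) [Fintype P] [PartialOrder P] : Fintype (OrderIdeals P) :=
  @Subtype.fintype _ _ (Classical.decPred _) _

/-- The maximal order ideal: all of `P`. -/
def topIdeal (P : Type*) [Fintype P] [PartialOrder P] : OrderIdeals P :=
  ⟨Finset.univ, fun _ _ y _ => Finset.mem_univ y⟩

/-- The minimal order ideal: the empty ideal. -/
def botIdeal (P : Type*) [Fintype P] [PartialOrder P] : OrderIdeals P :=
  ⟨∅, fun x hx => absurd hx (Finset.notMem_empty x)⟩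

namespace ThmAux

open Finset

variable {P : Type} [Fintype P] [PartialOrder P]

/-- The maximal elements of an order ideal. -/
def MaxSet (x : OrderIdeals P) : Finset P :=
  x.1.filter fun a => ∀ b ∈ x.1, a ≤ b → b = a

lemma mem_maxSet {x : OrderIdeals P} {a : P} :
    a ∈ MaxSet x ↔ a ∈ x.1 ∧ ∀ b ∈ x.1, a ≤ b → b = a := by
  simp [MaxSet]

/-- Removing a subset of maximal elements from an ideal gives an ideal. -/
def stepSet (x : OrderIdeals P) (B : Finset P) : OrderIdeals P :=
  ⟨x.1 \ (B ∩ MaxSet x), by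
    intro a ha b hb
    rw [mem_sdiff] at ha ⊢
    refine ⟨x.2 a ha.1 b hb, fun hmem => ?_⟩
    rcases mem_inter.1 hmem with ⟨hB, hM⟩
    have := (mem_maxSet.1 hM).2 a ha.1 hb
    exact ha.2 (this ▸ hmem)⟩

lemma stepSet_val (x : OrderIdeals P) (B : Finset P) :
    (stepSet x B).1 = x.1 \ (B ∩ MaxSet x) := rfl

lemma stepSet_mono {x y : OrderIdeals P} (hxy : x.1 ⊆ y.1) (B : Finset P) :
    (stepSet x B).1 ⊆ (stepSet y B).1 := by
  intro a ha
  rw [stepSet_val, mem_sdiff] at ha ⊢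
  refine ⟨hxy ha.1, fun hmem => ?_⟩
  rcases mem_inter.1 hmem with ⟨hB, hM⟩
  refine ha.2 (mem_inter.2 ⟨hB, mem_maxSet.2 ⟨ha.1, fun b hb hab => ?_⟩⟩)
  exact (mem_maxSet.1 hM).2 b (hxy hb) hab

lemma stepSet_inter (x : OrderIdeals P) (B : Finset P) :
    stepSet x (B ∩ MaxSet x) = stepSet x B := by
  apply Subtype.ext
  rw [stepSet_val, stepSet_val, inter_assoc, inter_self]

lemma stepSet_singleton_val {x : OrderIdeals P} {a : P} (ha : a ∈ MaxSet x) :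
    (stepSet x {a}).1 = x.1.erase a := by
  rw [stepSet_val, singleton_inter_of_mem ha, sdiff_singleton_eq_erase]
lemma covRel_of_max {x : OrderIdeals P} {a : P} (ha : a ∈ MaxSet x) :
    Ungarian.CovRel (fun A B : OrderIdeals P => A.1 ⊆ B.1) x (stepSet x {a}) := by
  have hval := stepSet_singleton_val ha
  have hax : a ∈ x.1 := (mem_maxSet.1 ha).1
  refine ⟨show (stepSet x {a}).1 ⊆ x.1 by rw [hval]; exact erase_subset _ _, ?_, ?_⟩
  · intro h
    have : a ∈ (stepSet x {a}).1 := by rw [h]; exact hax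
    rw [hval] at this
    exact notMem_erase a _ this
  · intro z h1 h2
    rw [hval] at h1
    by_cases haz : a ∈ z.1
    · right
      apply Subtype.ext
      refine subset_antisymm h2 fun b hb => ?_
      by_cases hba : b = a
      · exact hba ▸ haz
      · exact h1 (mem_erase.2 ⟨hba, hb⟩)
    · left
      apply Subtype.ext
      rw [hval]
      refine subset_antisymm (fun b hb => mem_erase.2 ⟨?_, h2 hb⟩) h1
      rintro rfl; exact haz hb

lemma max_of_covRel {x y : OrderIdeals P}
    (h : Ungarian.CovRel (fun A B : OrderIdeals P => A.1 ⊆ B.1) x y) :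
    ∃ a ∈ MaxSet x, stepSet x {a} = y := by
  obtain ⟨hsub, hne, hcov⟩ := h
  have hnsub : ¬x.1 ⊆ y.1 := fun hs => hne (Subtype.ext (subset_antisymm hsub hs))
  obtain ⟨a, ha, hamax⟩ : ∃ a ∈ x.1 \ y.1, ∀ b ∈ x.1 \ y.1, ¬ a < b := by
    obtain ⟨a, ha⟩ := Finset.exists_maximal (sdiff_nonempty.2 hnsub)
    exact ⟨a, ha.1, fun b hb hlt => hlt.not_ge (ha.2 hb hlt.le)⟩
  rw [mem_sdiff] at ha
  have haM : a ∈ MaxSet x := by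
    refine mem_maxSet.2 ⟨ha.1, fun b hb hab => ?_⟩
    by_contra hba
    have hlt : a < b := lt_of_le_of_ne hab (Ne.symm hba)
    have hby : b ∉ y.1 := fun hby => ha.2 (y.2 b hby a hab)
    exact hamax b (mem_sdiff.2 ⟨hb, hby⟩) hlt
  have hval := stepSet_singleton_val haM
  have h1 : y.1 ⊆ (stepSet x {a}).1 := by
    rw [hval]
    intro b hb
    exact mem_erase.2 ⟨fun hba => ha.2 (hba ▸ hb), hsub hb⟩
  have h2 : (stepSet x {a}).1 ⊆ x.1 := by rw [hval]; exact erase_subset _ _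
  rcases hcov (stepSet x {a}) h1 h2 with heq | heq
  · exact ⟨a, haM, heq⟩
  · exfalso
    have : a ∈ (stepSet x {a}).1 := by rw [heq]; exact ha.1
    rw [hval] at this
    exact notMem_erase a _ this

lemma stepSet_singleton_injOn (x : OrderIdeals P) :
    Set.InjOn (fun a => stepSet x {a}) ↑(MaxSet x) := by
  intro a ha b hb hab
  simp only at hab
  have hval : x.1.erase a = x.1.erase b := by
    rw [← stepSet_singleton_val ha, ← stepSet_singleton_val hb, hab]
  have hax : a ∈ x.1 := (mem_maxSet.1 ha).1
  by_contra hne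
  have : a ∈ x.1.erase b := mem_erase.2 ⟨hne, hax⟩
  rw [← hval] at this
  exact notMem_erase a _ this

lemma covFinset_eq (x : OrderIdeals P) :
    Ungarian.covFinset (fun A B : OrderIdeals P => A.1 ⊆ B.1) x
      = (MaxSet x).image (fun a => stepSet x {a}) := by
  ext y
  simp only [Ungarian.covFinset, mem_filter, mem_univ, true_and, mem_image]
  constructor
  · exact max_of_covRel
  · rintro ⟨a, ha, rfl⟩
    exact covRel_of_max ha
lemma isMeetOf_unique {S : Set (OrderIdeals P)} {m₁ m₂ : OrderIdeals P}
    (h₁ : Ungarian.IsMeetOf (fun A B : OrderIdeals P => A.1 ⊆ B.1) S m₁)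
    (h₂ : Ungarian.IsMeetOf (fun A B : OrderIdeals P => A.1 ⊆ B.1) S m₂) : m₁ = m₂ :=
  Subtype.ext (subset_antisymm (h₂.2 m₁ h₁.1) (h₁.2 m₂ h₂.1))

lemma meetOf_eq {x m : OrderIdeals P} {T : Finset (OrderIdeals P)}
    (h : Ungarian.IsMeetOf (fun A B : OrderIdeals P => A.1 ⊆ B.1) (insert x (T : Set (OrderIdeals P))) m) :
    Ungarian.meetOf (fun A B : OrderIdeals P => A.1 ⊆ B.1) x T = m := by
  have hex : ∃ m', Ungarian.IsMeetOf (fun A B : OrderIdeals P => A.1 ⊆ B.1)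
      (insert x (T : Set (OrderIdeals P))) m' := ⟨m, h⟩
  rw [Ungarian.meetOf, dif_pos hex]
  exact isMeetOf_unique hex.choose_spec h

lemma isMeetOf_image {x : OrderIdeals P} {A : Finset P} (hA : A ⊆ MaxSet x) :
    Ungarian.IsMeetOf (fun A B : OrderIdeals P => A.1 ⊆ B.1)
      (insert x ((A.image fun a => stepSet x {a} : Finset (OrderIdeals P)) : Set (OrderIdeals P)))
      (stepSet x A) := by
  constructor
  · intro s hs
    rcases Set.mem_insert_iff.1 hs with rfl | hs
    · exact sdiff_subset
    · rw [mem_coe, mem_image] at hs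
      obtain ⟨a, haA, rfl⟩ := hs
      show (stepSet x A).1 ⊆ (stepSet x {a}).1
      rw [stepSet_val, stepSet_val]
      refine sdiff_subset_sdiff Subset.rfl (inter_subset_inter ?_ Subset.rfl)
      simp [haA]
  · intro z hz
    have hzx : z.1 ⊆ x.1 := hz x (Set.mem_insert _ _)
    intro b hb
    rw [stepSet_val, mem_sdiff]
    refine ⟨hzx hb, fun hmem => ?_⟩
    rcases mem_inter.1 hmem with ⟨hbA, hbM⟩
    have hmem' : stepSet x {b} ∈
        insert x ((A.image fun a => stepSet x {a} : Finset (OrderIdeals P)) : Set (OrderIdeals P)) :=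
      Set.mem_insert_of_mem _ (by rw [mem_coe, mem_image]; exact ⟨b, hbA, rfl⟩)
    have hzb : z.1 ⊆ (stepSet x {b}).1 := hz _ hmem'
    have := hzb hb
    rw [stepSet_val, mem_sdiff] at this
    exact this.2 (mem_inter.2 ⟨mem_singleton_self b, hbM⟩)

lemma meetOf_image {x : OrderIdeals P} {A : Finset P} (hA : A ⊆ MaxSet x) :
    Ungarian.meetOf (fun A B : OrderIdeals P => A.1 ⊆ B.1) x (A.image fun a => stepSet x {a})
      = stepSet x A :=
  meetOf_eq (isMeetOf_image hA)

lemma stepProb_max (p : ℝ) (x z : OrderIdeals P) :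
    Ungarian.stepProb p (fun A B : OrderIdeals P => A.1 ⊆ B.1) x z
      = ∑ A ∈ (MaxSet x).powerset,
          if stepSet x A = z then
            ENNReal.ofReal (p ^ A.card * (1 - p) ^ ((MaxSet x).card - A.card))
          else 0 := by
  rw [Ungarian.stepProb]
  have hinj := stepSet_singleton_injOn x
  have hcard : (Ungarian.covFinset (fun A B : OrderIdeals P => A.1 ⊆ B.1) x).card
      = (MaxSet x).card := by
    rw [covFinset_eq, card_image_of_injOn hinj]
  refine (Finset.sum_bij'
    (i := fun A (_ : A ∈ (MaxSet x).powerset) => A.image fun a => stepSet x {a})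
    (j := fun T (_ : T ∈ (Ungarian.covFinset (fun A B : OrderIdeals P => A.1 ⊆ B.1) x).powerset) =>
      (MaxSet x).filter fun a => stepSet x {a} ∈ T)
    ?_ ?_ ?_ ?_ ?_).symm
  · intro A hA
    rw [mem_powerset] at hA ⊢
    rw [covFinset_eq]
    exact image_subset_image hA
  · intro T hT
    rw [mem_powerset]
    exact filter_subset _ _
  · intro A hA
    rw [mem_powerset] at hA
    ext a
    simp only [mem_filter, mem_image]
    constructor
    · rintro ⟨haM, b, hbA, hba⟩
      rwa [← hinj (hA hbA) haM hba]
    · intro haA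
      exact ⟨hA haA, a, haA, rfl⟩
  · intro T hT
    rw [mem_powerset, covFinset_eq] at hT
    ext y
    simp only [mem_image, mem_filter]
    constructor
    · rintro ⟨a, ⟨haM, haT⟩, rfl⟩
      exact haT
    · intro hyT
      obtain ⟨a, haM, rfl⟩ := mem_image.1 (hT hyT)
      exact ⟨a, ⟨haM, hyT⟩, rfl⟩
  · intro A hA
    rw [mem_powerset] at hA
    rw [meetOf_image hA, hcard, card_image_of_injOn (hinj.mono (by exact_mod_cast hA))]
lemma sum_extend_aux {p : ℝ} (hp0 : 0 ≤ p) (hp1 : p ≤ 1) (g : Finset P → ℝ≥0∞)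
    (S : Finset P) :
    ∀ D : Finset P, Disjoint S D →
      ∑ B ∈ (S ∪ D).powerset,
          ENNReal.ofReal (p ^ B.card * (1 - p) ^ ((S ∪ D).card - B.card)) * g (B ∩ S)
        = ∑ A ∈ S.powerset,
            ENNReal.ofReal (p ^ A.card * (1 - p) ^ (S.card - A.card)) * g A := by
  intro D
  induction D using Finset.induction_on with
  | empty =>
    intro _
    rw [union_empty]
    refine Finset.sum_congr rfl fun B hB => ?_
    rw [inter_eq_left.2 (mem_powerset.1 hB)]
  | insert a D' haD ih =>
    intro hdis
    rw [Finset.disjoint_insert_right] at hdis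
    obtain ⟨haS, hdis'⟩ := hdis
    have haU : a ∉ S ∪ D' := by simp [haS, haD]
    rw [union_insert, powerset_insert, sum_union ?hd]
    case hd =>
      rw [disjoint_left]
      intro B hB hB'
      obtain ⟨C, hC, rfl⟩ := mem_image.1 hB'
      exact haU (mem_powerset.1 hB (mem_insert_self a C))
    rw [sum_image ?hi]
    case hi =>
      intro B hB C hC h
      rw [mem_coe, mem_powerset] at hB hC
      have haB : a ∉ B := fun h' => haU (hB h')
      have haC : a ∉ C := fun h' => haU (hC h')
      rw [← erase_insert haB, h, erase_insert haC]
    rw [← sum_add_distrib]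
    rw [← ih hdis']
    refine Finset.sum_congr rfl fun B hB => ?_
    rw [mem_powerset] at hB
    have haB : a ∉ B := fun h' => haU (hB h')
    have hk : B.card ≤ (S ∪ D').card := card_le_card hB
    rw [card_insert_of_notMem haU, card_insert_of_notMem haB,
      insert_inter_of_notMem haS, ← add_mul]
    congr 1
    have h1 : (S ∪ D').card + 1 - B.card = ((S ∪ D').card - B.card) + 1 := by omega
    have h2 : (S ∪ D').card + 1 - (B.card + 1) = (S ∪ D').card - B.card := by omega
    rw [h1, h2, ← ENNReal.ofReal_add
      (mul_nonneg (pow_nonneg hp0 _) (pow_nonneg (by linarith) _))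
      (mul_nonneg (pow_nonneg hp0 _) (pow_nonneg (by linarith) _))]
    congr 1
    rw [pow_succ, pow_succ]
    ring

lemma stepProb_univ {p : ℝ} (hp0 : 0 ≤ p) (hp1 : p ≤ 1) (x z : OrderIdeals P) :
    Ungarian.stepProb p (fun A B : OrderIdeals P => A.1 ⊆ B.1) x z
      = ∑ B ∈ (univ : Finset P).powerset,
          if stepSet x B = z then
            ENNReal.ofReal (p ^ B.card * (1 - p) ^ ((univ : Finset P).card - B.card))
          else 0 := by
  rw [stepProb_max]
  have key := sum_extend_aux hp0 hp1 (fun A => if stepSet x A = z then 1 else 0)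
    (MaxSet x) (univ \ MaxSet x) disjoint_sdiff
  rw [union_sdiff_of_subset (subset_univ _)] at key
  calc ∑ A ∈ (MaxSet x).powerset,
        (if stepSet x A = z then
          ENNReal.ofReal (p ^ A.card * (1 - p) ^ ((MaxSet x).card - A.card)) else 0)
      = ∑ A ∈ (MaxSet x).powerset,
          ENNReal.ofReal (p ^ A.card * (1 - p) ^ ((MaxSet x).card - A.card))
            * (if stepSet x A = z then 1 else 0) := by
        refine Finset.sum_congr rfl fun A _ => ?_
        split <;> simp
    _ = ∑ B ∈ (univ : Finset P).powerset,
          ENNReal.ofReal (p ^ B.card * (1 - p) ^ ((univ : Finset P).card - B.card))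
            * (if stepSet x (B ∩ MaxSet x) = z then 1 else 0) := key.symm
    _ = _ := by
        refine Finset.sum_congr rfl fun B _ => ?_
        rw [stepSet_inter]
        split <;> simp
/-- Joint step kernel: both chains use the same coin subset `B`. -/
def jstep (p : ℝ) (c d a b : OrderIdeals P) : ℝ≥0∞ :=
  ∑ B ∈ (univ : Finset P).powerset,
    if stepSet c B = a ∧ stepSet d B = b then
      ENNReal.ofReal (p ^ B.card * (1 - p) ^ ((univ : Finset P).card - B.card))
    else 0

/-- The coupled walk started at `(x, y)`. -/
def cw (p : ℝ) (x y : OrderIdeals P) : ℕ → OrderIdeals P → OrderIdeals P → ℝ≥0∞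
  | 0 => fun a b => if a = x ∧ b = y then 1 else 0
  | t + 1 => fun a b =>
      ∑ c : OrderIdeals P, ∑ d : OrderIdeals P, cw p x y t c d * jstep p c d a b

lemma jstep_fst {p : ℝ} (hp0 : 0 ≤ p) (hp1 : p ≤ 1) (c d a : OrderIdeals P) :
    ∑ b : OrderIdeals P, jstep p c d a b
      = Ungarian.stepProb p (fun A B : OrderIdeals P => A.1 ⊆ B.1) c a := by
  simp only [jstep]
  rw [Finset.sum_comm, stepProb_univ hp0 hp1]
  refine Finset.sum_congr rfl fun B _ => ?_
  have : ∀ b : OrderIdeals P,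
      (if stepSet c B = a ∧ stepSet d B = b then
        ENNReal.ofReal (p ^ B.card * (1 - p) ^ ((univ : Finset P).card - B.card)) else 0)
      = if stepSet d B = b then
          (if stepSet c B = a then
            ENNReal.ofReal (p ^ B.card * (1 - p) ^ ((univ : Finset P).card - B.card)) else 0)
        else 0 := by
    intro b
    by_cases h1 : stepSet c B = a <;> by_cases h2 : stepSet d B = b <;>
      simp [h1, h2]
  rw [Finset.sum_congr rfl fun b _ => this b, Finset.sum_ite_eq univ (stepSet d B)]
  simp

lemma jstep_snd {p : ℝ} (hp0 : 0 ≤ p) (hp1 : p ≤ 1) (c d b : OrderIdeals P) :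
    ∑ a : OrderIdeals P, jstep p c d a b
      = Ungarian.stepProb p (fun A B : OrderIdeals P => A.1 ⊆ B.1) d b := by
  simp only [jstep]
  rw [Finset.sum_comm, stepProb_univ hp0 hp1]
  refine Finset.sum_congr rfl fun B _ => ?_
  have : ∀ a : OrderIdeals P,
      (if stepSet c B = a ∧ stepSet d B = b then
        ENNReal.ofReal (p ^ B.card * (1 - p) ^ ((univ : Finset P).card - B.card)) else 0)
      = if stepSet c B = a then
          (if stepSet d B = b then
            ENNReal.ofReal (p ^ B.card * (1 - p) ^ ((univ : Finset P).card - B.card)) else 0)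
        else 0 := by
    intro a
    by_cases h1 : stepSet c B = a <;> by_cases h2 : stepSet d B = b <;>
      simp [h1, h2]
  rw [Finset.sum_congr rfl fun a _ => this a, Finset.sum_ite_eq univ (stepSet c B)]
  simp

lemma cw_fst {p : ℝ} (hp0 : 0 ≤ p) (hp1 : p ≤ 1) (x y : OrderIdeals P) :
    ∀ (t : ℕ) (a : OrderIdeals P),
      ∑ b : OrderIdeals P, cw p x y t a b
        = Ungarian.walk p (fun A B : OrderIdeals P => A.1 ⊆ B.1) x t a := by
  intro t
  induction t with
  | zero =>
    intro a
    simp only [cw, Ungarian.walk]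
    have : ∀ b : OrderIdeals P,
        (if a = x ∧ b = y then (1 : ℝ≥0∞) else 0)
          = if b = y then (if a = x then 1 else 0) else 0 := by
      intro b
      by_cases h1 : a = x <;> by_cases h2 : b = y <;> simp [h1, h2]
    rw [Finset.sum_congr rfl fun b _ => this b, Finset.sum_ite_eq' univ y]
    simp
  | succ t ih =>
    intro a
    simp only [cw, Ungarian.walk]
    rw [Finset.sum_comm]
    refine Finset.sum_congr rfl fun c _ => ?_
    rw [Finset.sum_comm]
    calc ∑ d : OrderIdeals P, ∑ b : OrderIdeals P, cw p x y t c d * jstep p c d a b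
        = ∑ d : OrderIdeals P, cw p x y t c d * ∑ b : OrderIdeals P, jstep p c d a b := by
          refine Finset.sum_congr rfl fun d _ => ?_
          rw [Finset.mul_sum]
      _ = (∑ d : OrderIdeals P, cw p x y t c d)
            * Ungarian.stepProb p (fun A B : OrderIdeals P => A.1 ⊆ B.1) c a := by
          rw [Finset.sum_mul]
          refine Finset.sum_congr rfl fun d _ => ?_
          rw [jstep_fst hp0 hp1]
      _ = _ := by rw [ih c]

lemma cw_snd {p : ℝ} (hp0 : 0 ≤ p) (hp1 : p ≤ 1) (x y : OrderIdeals P) :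
    ∀ (t : ℕ) (b : OrderIdeals P),
      ∑ a : OrderIdeals P, cw p x y t a b
        = Ungarian.walk p (fun A B : OrderIdeals P => A.1 ⊆ B.1) y t b := by
  intro t
  induction t with
  | zero =>
    intro b
    simp only [cw, Ungarian.walk]
    have : ∀ a : OrderIdeals P,
        (if a = x ∧ b = y then (1 : ℝ≥0∞) else 0)
          = if a = x then (if b = y then 1 else 0) else 0 := by
      intro a
      by_cases h1 : a = x <;> by_cases h2 : b = y <;> simp [h1, h2]
    rw [Finset.sum_congr rfl fun a _ => this a, Finset.sum_ite_eq' univ x]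
    simp
  | succ t ih =>
    intro b
    simp only [cw, Ungarian.walk]
    calc ∑ a : OrderIdeals P, ∑ c : OrderIdeals P, ∑ d : OrderIdeals P,
            cw p x y t c d * jstep p c d a b
        = ∑ c : OrderIdeals P, ∑ d : OrderIdeals P,
            cw p x y t c d * ∑ a : OrderIdeals P, jstep p c d a b := by
          rw [Finset.sum_comm]
          refine Finset.sum_congr rfl fun c _ => ?_
          rw [Finset.sum_comm]
          refine Finset.sum_congr rfl fun d _ => ?_
          rw [Finset.mul_sum]
      _ = ∑ c : OrderIdeals P, ∑ d : OrderIdeals P,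
            cw p x y t c d
              * Ungarian.stepProb p (fun A B : OrderIdeals P => A.1 ⊆ B.1) d b := by
          refine Finset.sum_congr rfl fun c _ => Finset.sum_congr rfl fun d _ => ?_
          rw [jstep_snd hp0 hp1]
      _ = ∑ d : OrderIdeals P, (∑ c : OrderIdeals P, cw p x y t c d)
              * Ungarian.stepProb p (fun A B : OrderIdeals P => A.1 ⊆ B.1) d b := by
          rw [Finset.sum_comm]
          refine Finset.sum_congr rfl fun d _ => ?_
          rw [Finset.sum_mul]
      _ = _ := by
          refine Finset.sum_congr rfl fun d _ => ?_
          rw [ih d]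

lemma cw_support {p : ℝ} {x y : OrderIdeals P} (hxy : x.1 ⊆ y.1) :
    ∀ (t : ℕ) (a b : OrderIdeals P), cw p x y t a b ≠ 0 → a.1 ⊆ b.1 := by
  intro t
  induction t with
  | zero =>
    intro a b h
    simp only [cw] at h
    by_cases hc : a = x ∧ b = y
    · rw [hc.1, hc.2]; exact hxy
    · rw [if_neg hc] at h; exact absurd rfl h
  | succ t ih =>
    intro a b h
    simp only [cw] at h
    obtain ⟨c, _, hc⟩ := Finset.exists_ne_zero_of_sum_ne_zero h
    obtain ⟨d, _, hd⟩ := Finset.exists_ne_zero_of_sum_ne_zero hc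
    rw [mul_ne_zero_iff] at hd
    obtain ⟨hcw, hjs⟩ := hd
    obtain ⟨B, _, hB⟩ := Finset.exists_ne_zero_of_sum_ne_zero hjs
    by_cases hcond : stepSet c B = a ∧ stepSet d B = b
    · rw [← hcond.1, ← hcond.2]
      exact stepSet_mono (ih c d hcw) B
    · rw [if_neg hcond] at hB; exact absurd rfl hB
lemma probIn_mono {p : ℝ} (hp0 : 0 ≤ p) (hp1 : p ≤ 1) {x y : OrderIdeals P}
    (hxy : x.1 ⊆ y.1) (S : Set (OrderIdeals P))
    (hS : ∀ a b : OrderIdeals P, a.1 ⊆ b.1 → a ∈ S → b ∈ S) (t : ℕ) :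
    Ungarian.probIn p (fun A B : OrderIdeals P => A.1 ⊆ B.1) x t S ≤
      Ungarian.probIn p (fun A B : OrderIdeals P => A.1 ⊆ B.1) y t S := by
  rw [Ungarian.probIn, Ungarian.probIn, Finset.sum_filter, Finset.sum_filter]
  calc ∑ a : OrderIdeals P,
        (if a ∈ S then
          Ungarian.walk p (fun A B : OrderIdeals P => A.1 ⊆ B.1) x t a else 0)
      = ∑ a : OrderIdeals P, ∑ b : OrderIdeals P,
          (if a ∈ S then cw p x y t a b else 0) := by
        refine Finset.sum_congr rfl fun a _ => ?_
        rw [← cw_fst hp0 hp1 x y t a]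
        split
        · rfl
        · simp
    _ ≤ ∑ a : OrderIdeals P, ∑ b : OrderIdeals P,
          (if b ∈ S then cw p x y t a b else 0) := by
        refine Finset.sum_le_sum fun a _ => Finset.sum_le_sum fun b _ => ?_
        by_cases hz : cw p x y t a b = 0
        · simp [hz]
        · have hab := cw_support hxy t a b hz
          by_cases ha : a ∈ S
          · rw [if_pos ha, if_pos (hS a b hab ha)]
          · simp [ha]
    _ = ∑ b : OrderIdeals P,
          (if b ∈ S then
            Ungarian.walk p (fun A B : OrderIdeals P => A.1 ⊆ B.1) y t b else 0) := by
        rw [Finset.sum_comm]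
        refine Finset.sum_congr rfl fun b _ => ?_
        rw [← cw_snd hp0 hp1 x y t b]
        split
        · rfl
        · simp

lemma ne_bot_of_subset {a b : OrderIdeals P} (hab : a.1 ⊆ b.1) (ha : a ≠ botIdeal P) :
    b ≠ botIdeal P := by
  intro hb
  apply ha
  apply Subtype.ext
  have : b.1 = ∅ := by rw [hb]; rfl
  rw [this] at hab
  show a.1 = (botIdeal P).1
  exact subset_empty.1 hab

end ThmAux

/-- Starting the Ungarian Markov chain on `J(P)` at any order ideal `J'` produces a hitting
time of the empty ideal that is stochastically dominated by the one started at the full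
ideal `P`: for every `t`, `P(T_{J(P)}(J') ≥ t) ≤ P(T(J(P)) ≥ t)`.  Here the probability that
the hitting time exceeds `t` is the probability that the chain is not at the empty ideal
after `t` steps (the empty ideal is absorbing). -/
theorem thm8 (P : Type) [Fintype P] [PartialOrder P] (p : ℝ) (hp0 : 0 < p) (hp1 : p ≤ 1)
    (J' : OrderIdeals P) (t : ℕ) :
    Ungarian.probIn p (fun A B : OrderIdeals P => A.1 ⊆ B.1) J' t
        {I : OrderIdeals P | I ≠ botIdeal P} ≤
      Ungarian.probIn p (fun A B : OrderIdeals P => A.1 ⊆ B.1) (topIdeal P) t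
        {I : OrderIdeals P | I ≠ botIdeal P} :=
  ThmAux.probIn_mono hp0.le hp1 (Finset.subset_univ _) _
    (fun a b hab ha => ThmAux.ne_bot_of_subset hab ha) t
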